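/- Let X be a real random variable with mean zero and E|X|^{2+θ} ≤ M for some 0 < θ ≤ 1 and M > 0, and let κ > 0. Then |E|t_κ(X) − E t_κ(X)|² − E|X|²| ≤ E[|X|² 1{|X| ≥ κ}] + (E[|X| 1{|X| ≥ κ}])² ≤ κ^{−θ} M + κ^{−2(1+θ)} M². -/

import Mathlib

open MeasureTheory

/-- The truncation function `t_κ(x) = (x ∧ κ) ∨ (-κ)`. -/
noncomputable def tk (κ x : ℝ) : ℝ := max (min x κ) (-κ)

lemma tk_abs_le {κ : ℝ} (hκ : 0 < κ) (x : ℝ) : |tk κ x| ≤ |x| := by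
  rw [abs_le]
  constructor
  · calc -|x| ≤ min x κ := le_min (neg_abs_le x) (by linarith [abs_nonneg x])
      _ ≤ tk κ x := le_max_left _ _
  · exact max_le (le_trans (min_le_left _ _) (le_abs_self x))
      (by linarith [abs_nonneg x])

lemma tk_abs_le_kappa {κ : ℝ} (hκ : 0 < κ) (x : ℝ) : |tk κ x| ≤ κ := by
  rw [abs_le]
  exact ⟨le_max_right _ _, max_le (min_le_right _ _) (by linarith)⟩

lemma tk_eq_self {κ x : ℝ} (h : |x| ≤ κ) : tk κ x = x := by
  rw [abs_le] at h
  unfold tk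
  rw [min_eq_left h.2, max_eq_left h.1]

lemma tk_sub_abs_le {κ : ℝ} (hκ : 0 < κ) (x : ℝ) : |tk κ x - x| ≤ |x| := by
  rcases le_or_gt |x| κ with h | h
  · rw [tk_eq_self h, sub_self, abs_zero]
    exact abs_nonneg x
  · rcases abs_cases x with ⟨h1, h2⟩ | ⟨h1, h2⟩
    · have hx : κ < x := by linarith
      have ht : tk κ x = κ := by
        unfold tk
        rw [min_eq_right hx.le, max_eq_left (by linarith)]
      rw [ht, abs_le]
      constructor <;> [linarith [abs_nonneg x]; linarith]
    · have hx : x < -κ := by linarith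
      have ht : tk κ x = -κ := by
        unfold tk
        rw [min_eq_left (by linarith), max_eq_right (by linarith)]
      rw [ht, abs_le]
      constructor <;> [linarith; linarith [abs_nonneg x]]

/-- For a centered real random variable `X` with `E|X|^(2+θ) ≤ M`
(`0 < θ ≤ 1`, `M > 0`) and `κ > 0`, the variance of the truncation `t_κ(X)` differs
from `E|X|²` by at most `E[|X|² 1{|X| ≥ κ}] + (E[|X| 1{|X| ≥ κ}])²`, which in turn is at
most `κ^(-θ) M + κ^(-2(1+θ)) M²`. -/
theorem truncated_variance_perturbation {Ω : Type*} [MeasurableSpace Ω]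
    (P : Measure Ω) [IsProbabilityMeasure P]
    (X : Ω → ℝ) (hX : Measurable X)
    (θ M : ℝ) (hθ0 : 0 < θ) (hθ1 : θ ≤ 1) (hM : 0 < M)
    (hmean : ∫ ω, X ω ∂P = 0)
    (hint : Integrable (fun ω => |X ω| ^ (2 + θ)) P)
    (hmom : ∫ ω, |X ω| ^ (2 + θ) ∂P ≤ M)
    (κ : ℝ) (hκ : 0 < κ) :
    |(∫ ω, |tk κ (X ω) - ∫ ω', tk κ (X ω') ∂P| ^ 2 ∂P) - ∫ ω, |X ω| ^ 2 ∂P|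
        ≤ (∫ ω in {ω | κ ≤ |X ω|}, |X ω| ^ 2 ∂P)
          + (∫ ω in {ω | κ ≤ |X ω|}, |X ω| ∂P) ^ 2 ∧
      (∫ ω in {ω | κ ≤ |X ω|}, |X ω| ^ 2 ∂P)
          + (∫ ω in {ω | κ ≤ |X ω|}, |X ω| ∂P) ^ 2
        ≤ κ ^ (-θ) * M + κ ^ (-(2 * (1 + θ))) * M ^ 2 := by
  have hS : MeasurableSet {ω | κ ≤ |X ω|} := measurableSet_le measurable_const hX.abs
  set S : Set Ω := {ω | κ ≤ |X ω|} with hSdef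
  set T : Ω → ℝ := fun ω => tk κ (X ω) with hTdef
  have hTm : Measurable T := (hX.min measurable_const).max measurable_const
  -- integrability facts
  have hrpow_nonneg : ∀ ω, (0:ℝ) ≤ |X ω| ^ (2 + θ) := fun ω =>
    Real.rpow_nonneg (abs_nonneg _) _
  have hX2 : Integrable (fun ω => X ω ^ 2) P := by
    apply Integrable.mono' (hint.add (integrable_const 1))
      ((hX.pow_const 2).aestronglyMeasurable)
    filter_upwards with ω
    simp only [Pi.add_apply]
    rw [Real.norm_eq_abs, abs_of_nonneg (sq_nonneg _), ← sq_abs]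
    rcases le_or_gt (|X ω|) 1 with h | h
    · have h1 : |X ω| ^ 2 ≤ 1 := pow_le_one₀ (abs_nonneg _) h
      linarith [hrpow_nonneg ω]
    · have h1 : |X ω| ^ 2 = |X ω| ^ ((2:ℕ):ℝ) := (Real.rpow_natCast _ 2).symm
      have h2 : |X ω| ^ ((2:ℕ):ℝ) ≤ |X ω| ^ (2 + θ) :=
        Real.rpow_le_rpow_of_exponent_le h.le (by push_cast; linarith)
      linarith [h1 ▸ h2]
  have hX1 : Integrable X P := by
    apply Integrable.mono' (hX2.add (integrable_const 1)) hX.aestronglyMeasurable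
    filter_upwards with ω
    simp only [Pi.add_apply]
    rw [Real.norm_eq_abs]
    nlinarith [sq_nonneg (|X ω| - 1), abs_nonneg (X ω), sq_abs (X ω)]
  have hTint : Integrable T P := by
    apply Integrable.mono' (integrable_const κ) hTm.aestronglyMeasurable
    filter_upwards with ω
    exact tk_abs_le_kappa hκ (X ω)
  have hT2int : Integrable (fun ω => T ω ^ 2) P := by
    apply Integrable.mono' (integrable_const (κ ^ 2)) ((hTm.pow_const 2).aestronglyMeasurable)
    filter_upwards with ω
    rw [Real.norm_eq_abs, abs_of_nonneg (sq_nonneg _), ← sq_abs]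
    exact pow_le_pow_left₀ (abs_nonneg _) (tk_abs_le_kappa hκ (X ω)) 2
  set m : ℝ := ∫ ω', T ω' ∂P with hmdef
  -- pointwise bounds
  have hT_le_X : ∀ ω, T ω ^ 2 ≤ X ω ^ 2 := fun ω => by
    rw [← sq_abs (T ω), ← sq_abs (X ω)]
    exact pow_le_pow_left₀ (abs_nonneg _) (tk_abs_le hκ (X ω)) 2
  -- Step A : variance expansion
  have hA : (∫ ω, |T ω - m| ^ 2 ∂P) = (∫ ω, T ω ^ 2 ∂P) - m ^ 2 := by
    have hpt : ∀ ω, |T ω - m| ^ 2 = T ω ^ 2 - 2 * m * T ω + m ^ 2 := fun ω => by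
      rw [sq_abs]; ring
    simp_rw [hpt]
    have hint1 : Integrable (fun ω => T ω ^ 2 - 2 * m * T ω) P :=
      hT2int.sub (hTint.const_mul (2 * m))
    rw [integral_add hint1 (integrable_const _),
      integral_sub hT2int (hTint.const_mul (2 * m)), integral_const_mul, integral_const]
    simp only [measure_univ, probReal_univ, ENNReal.toReal_one, smul_eq_mul, one_mul, ← hmdef]
    ring
  -- Step B : difference of second moments localizes to S
  have hB : (∫ ω, X ω ^ 2 ∂P) - (∫ ω, T ω ^ 2 ∂P) = ∫ ω in S, (X ω ^ 2 - T ω ^ 2) ∂P := by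
    rw [← integral_sub hX2 hT2int]
    exact (setIntegral_eq_integral_of_forall_compl_eq_zero (fun ω hω => by
      have hlt : |X ω| < κ := not_le.1 hω
      have : T ω = X ω := tk_eq_self hlt.le
      rw [this, sub_self])).symm
  have hBnonneg : 0 ≤ ∫ ω in S, (X ω ^ 2 - T ω ^ 2) ∂P :=
    setIntegral_nonneg hS (fun ω _ => sub_nonneg.2 (hT_le_X ω))
  have hBle : (∫ ω in S, (X ω ^ 2 - T ω ^ 2) ∂P) ≤ ∫ ω in S, X ω ^ 2 ∂P :=
    setIntegral_mono_on (hX2.sub hT2int).integrableOn hX2.integrableOn hS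
      (fun ω _ => by nlinarith [sq_nonneg (T ω)])
  -- Step C : bound on the truncated mean
  have hmabs : |m| ≤ ∫ ω in S, |X ω| ∂P := by
    have hm' : m = ∫ ω, (T ω - X ω) ∂P := by
      rw [integral_sub hTint hX1, hmean, sub_zero]
    have h1 : |m| ≤ ∫ ω, |T ω - X ω| ∂P := by
      rw [hm']
      simpa [Real.norm_eq_abs] using
        norm_integral_le_integral_norm (μ := P) (fun ω => T ω - X ω)
    have h2 : (∫ ω, |T ω - X ω| ∂P) = ∫ ω in S, |T ω - X ω| ∂P :=
      (setIntegral_eq_integral_of_forall_compl_eq_zero (fun ω hω => by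
        have hlt : |X ω| < κ := not_le.1 hω
        have : T ω = X ω := tk_eq_self hlt.le
        rw [this, sub_self, abs_zero])).symm
    have h3 : (∫ ω in S, |T ω - X ω| ∂P) ≤ ∫ ω in S, |X ω| ∂P :=
      setIntegral_mono_on (hTint.sub hX1).abs.integrableOn hX1.abs.integrableOn hS
        (fun ω _ => tk_sub_abs_le hκ (X ω))
    linarith
  have hm2 : m ^ 2 ≤ (∫ ω in S, |X ω| ∂P) ^ 2 := by
    have := pow_le_pow_left₀ (abs_nonneg m) hmabs 2
    rwa [sq_abs] at this
  -- Part 2 pointwise bounds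
  have hI1 : (∫ ω in S, X ω ^ 2 ∂P) ≤ κ ^ (-θ) * M := by
    have hpt : ∀ ω ∈ S, X ω ^ 2 ≤ κ ^ (-θ) * |X ω| ^ (2 + θ) := by
      intro ω hω
      have hωS : κ ≤ |X ω| := hω
      have hx : (0:ℝ) < |X ω| := lt_of_lt_of_le hκ hωS
      have hk : (0:ℝ) < κ ^ θ := Real.rpow_pos_of_pos hκ θ
      have h1 : |X ω| ^ (2 + θ) = |X ω| ^ 2 * |X ω| ^ θ := by
        rw [Real.rpow_add hx, Real.rpow_two]
      have h3 : κ ^ θ ≤ |X ω| ^ θ := Real.rpow_le_rpow hκ.le hωS hθ0.le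
      calc X ω ^ 2 = (κ ^ θ)⁻¹ * (|X ω| ^ 2 * κ ^ θ) := by
            rw [← sq_abs]; field_simp
        _ ≤ (κ ^ θ)⁻¹ * (|X ω| ^ 2 * |X ω| ^ θ) := by
            apply mul_le_mul_of_nonneg_left _ (inv_nonneg.2 hk.le)
            exact mul_le_mul_of_nonneg_left h3 (sq_nonneg _)
        _ = κ ^ (-θ) * |X ω| ^ (2 + θ) := by
            rw [h1, Real.rpow_neg hκ.le]
    calc (∫ ω in S, X ω ^ 2 ∂P) ≤ ∫ ω in S, κ ^ (-θ) * |X ω| ^ (2 + θ) ∂P :=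
          setIntegral_mono_on hX2.integrableOn (hint.const_mul _).integrableOn hS hpt
      _ = κ ^ (-θ) * ∫ ω in S, |X ω| ^ (2 + θ) ∂P := integral_const_mul _ _
      _ ≤ κ ^ (-θ) * ∫ ω, |X ω| ^ (2 + θ) ∂P := by
          apply mul_le_mul_of_nonneg_left _ (Real.rpow_nonneg hκ.le _)
          exact setIntegral_le_integral hint (Filter.Eventually.of_forall hrpow_nonneg)
      _ ≤ κ ^ (-θ) * M := mul_le_mul_of_nonneg_left hmom (Real.rpow_nonneg hκ.le _)
  have hI2 : (∫ ω in S, |X ω| ∂P) ≤ κ ^ (-(1 + θ)) * M := by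
    have hpt : ∀ ω ∈ S, |X ω| ≤ κ ^ (-(1 + θ)) * |X ω| ^ (2 + θ) := by
      intro ω hω
      have hωS : κ ≤ |X ω| := hω
      have hx : (0:ℝ) < |X ω| := lt_of_lt_of_le hκ hωS
      have hk : (0:ℝ) < κ ^ (1 + θ) := Real.rpow_pos_of_pos hκ _
      have h1 : |X ω| ^ (2 + θ) = |X ω| * |X ω| ^ (1 + θ) := by
        rw [show (2:ℝ) + θ = 1 + (1 + θ) by ring, Real.rpow_add hx, Real.rpow_one]
      have h3 : κ ^ (1 + θ) ≤ |X ω| ^ (1 + θ) :=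
        Real.rpow_le_rpow hκ.le hωS (by linarith)
      calc |X ω| = (κ ^ (1 + θ))⁻¹ * (|X ω| * κ ^ (1 + θ)) := by field_simp
        _ ≤ (κ ^ (1 + θ))⁻¹ * (|X ω| * |X ω| ^ (1 + θ)) := by
            apply mul_le_mul_of_nonneg_left _ (inv_nonneg.2 hk.le)
            exact mul_le_mul_of_nonneg_left h3 (abs_nonneg _)
        _ = κ ^ (-(1 + θ)) * |X ω| ^ (2 + θ) := by
            rw [h1, Real.rpow_neg hκ.le]
    calc (∫ ω in S, |X ω| ∂P) ≤ ∫ ω in S, κ ^ (-(1 + θ)) * |X ω| ^ (2 + θ) ∂P :=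
          setIntegral_mono_on hX1.abs.integrableOn (hint.const_mul _).integrableOn hS hpt
      _ = κ ^ (-(1 + θ)) * ∫ ω in S, |X ω| ^ (2 + θ) ∂P := integral_const_mul _ _
      _ ≤ κ ^ (-(1 + θ)) * ∫ ω, |X ω| ^ (2 + θ) ∂P := by
          apply mul_le_mul_of_nonneg_left _ (Real.rpow_nonneg hκ.le _)
          exact setIntegral_le_integral hint (Filter.Eventually.of_forall hrpow_nonneg)
      _ ≤ κ ^ (-(1 + θ)) * M := mul_le_mul_of_nonneg_left hmom (Real.rpow_nonneg hκ.le _)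
  have hSnonneg : 0 ≤ ∫ ω in S, |X ω| ∂P :=
    setIntegral_nonneg hS (fun ω _ => abs_nonneg _)
  have hI2sq : (∫ ω in S, |X ω| ∂P) ^ 2 ≤ κ ^ (-(2 * (1 + θ))) * M ^ 2 := by
    have h1 : (∫ ω in S, |X ω| ∂P) ^ 2 ≤ (κ ^ (-(1 + θ)) * M) ^ 2 :=
      pow_le_pow_left₀ hSnonneg hI2 2
    have h2 : (κ ^ (-(1 + θ)) * M) ^ 2 = κ ^ (-(2 * (1 + θ))) * M ^ 2 := by
      rw [mul_pow]
      congr 1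
      rw [← Real.rpow_natCast (κ ^ (-(1+θ))) 2, ← Real.rpow_mul hκ.le]
      congr 1
      push_cast
      ring
    linarith
  -- assemble
  have hXsq : (∫ ω, |X ω| ^ 2 ∂P) = ∫ ω, X ω ^ 2 ∂P := by simp only [sq_abs]
  have hXsqS : (∫ ω in S, |X ω| ^ 2 ∂P) = ∫ ω in S, X ω ^ 2 ∂P := by simp only [sq_abs]
  constructor
  · have key : (∫ ω, |T ω - m| ^ 2 ∂P) - (∫ ω, X ω ^ 2 ∂P)
        = -((∫ ω in S, (X ω ^ 2 - T ω ^ 2) ∂P) + m ^ 2) := by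
      rw [hA]; linarith [hB]
    rw [hXsq, hXsqS, key, abs_neg, abs_of_nonneg (by positivity)]
    linarith [add_le_add hBle hm2]
  · rw [hXsqS]
    exact add_le_add hI1 hI2sq
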